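/- Let (T, 𝒜, μ) be a finite measure space with 0 < μ(T) < ∞ and T₀ ∈ 𝒜 with μ(T₀) > 0. For positive measurable f, g : T → ℝ with ∫_T (log f)^2 dμ < ∞ and ∫_T (log g)^2 dμ < ∞, let P(f) : T → ℝ be the function equal to f on T₀ and equal to exp(S_{μ,T₀}(f)) on T ∖ T₀ (the orthogonal projection of f onto the embedded subspace B²(T₀)). Then P is self-adjoint with respect to the Bayes inner product: ∫_T (log P(f) − S_{μ,T}(P(f))) · (log g − S_{μ,T}(g)) dμ = ∫_T (log f − S_{μ,T}(f)) · (log P(g) − S_{μ,T}(P(g))) dμ, and both sides equal ∫_{T₀} (log f − S_{μ,T₀}(f)) · (log g − S_{μ,T₀}(g)) dμ. -/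

import Mathlib

open MeasureTheory

/-- Mean logarithmic integral of `f` over a measurable set `A`:
`S_{μ,A}(f) = (1/μ(A)) ∫_A log f dμ`. -/
noncomputable def Sm {T : Type*} [MeasurableSpace T] (μ : Measure T) (A : Set T)
    (f : T → ℝ) : ℝ :=
  (μ A).toReal⁻¹ * ∫ t in A, Real.log (f t) ∂μ

open scoped Classical in
/-- The orthogonal projection onto the embedded subspace `B²(T₀)`: `P(f)` equals `f` on `T₀`
and the geometric mean `exp(S_{μ,T₀}(f))` off `T₀`. -/
noncomputable def proj {T : Type*} [MeasurableSpace T] (μ : Measure T) (T₀ : Set T)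
    (f : T → ℝ) (t : T) : ℝ :=
  if t ∈ T₀ then f t else Real.exp (Sm μ T₀ f)

/-- The orthogonal projection `P` onto `B²(T₀)` is self-adjoint w.r.t. the Bayes inner product:
`⟨P(f), g⟩_{B²(T)} = ⟨f, P(g)⟩_{B²(T)}`, and both sides equal
`∫_{T₀} (log f − S_{μ,T₀}(f)) (log g − S_{μ,T₀}(g)) dμ`. -/
theorem proj_selfAdjoint
    {T : Type*} [MeasurableSpace T] (μ : Measure T)
    (hμ0 : 0 < μ Set.univ) (hμfin : μ Set.univ < ⊤)
    (T₀ : Set T) (hT₀meas : MeasurableSet T₀) (hT₀pos : 0 < μ T₀)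
    (f g : T → ℝ) (hf : Measurable f) (hg : Measurable g)
    (hfpos : ∀ t, 0 < f t) (hgpos : ∀ t, 0 < g t)
    (hfsq : Integrable (fun t => (Real.log (f t)) ^ 2) μ)
    (hgsq : Integrable (fun t => (Real.log (g t)) ^ 2) μ) :
    (∫ t, (Real.log (proj μ T₀ f t) - Sm μ Set.univ (proj μ T₀ f)) *
          (Real.log (g t) - Sm μ Set.univ g) ∂μ =
        ∫ t, (Real.log (f t) - Sm μ Set.univ f) *
          (Real.log (proj μ T₀ g t) - Sm μ Set.univ (proj μ T₀ g)) ∂μ) ∧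
      (∫ t, (Real.log (proj μ T₀ f t) - Sm μ Set.univ (proj μ T₀ f)) *
          (Real.log (g t) - Sm μ Set.univ g) ∂μ =
        ∫ t in T₀, (Real.log (f t) - Sm μ T₀ f) *
          (Real.log (g t) - Sm μ T₀ g) ∂μ) := by
  haveI : IsFiniteMeasure μ := ⟨hμfin⟩
  set L : T → ℝ := fun t => Real.log (f t) with hLdef
  set M : T → ℝ := fun t => Real.log (g t) with hMdef
  set Sf0 : ℝ := Sm μ T₀ f with hSf0def
  set Sg0 : ℝ := Sm μ T₀ g with hSg0def
  have hT₀fin : μ T₀ < ⊤ := lt_of_le_of_lt (measure_mono (Set.subset_univ _)) hμfin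
  have hT₀ne : (μ T₀).toReal ≠ 0 := by
    simp [ENNReal.toReal_eq_zero_iff, hT₀pos.ne', hT₀fin.ne]
  have hUne : (μ Set.univ).toReal ≠ 0 := by
    simp [ENNReal.toReal_eq_zero_iff, hμ0.ne', hμfin.ne]
  have hL2 : MemLp L 2 μ :=
    (memLp_two_iff_integrable_sq (hf.log.aestronglyMeasurable)).2 hfsq
  have hM2 : MemLp M 2 μ :=
    (memLp_two_iff_integrable_sq (hg.log.aestronglyMeasurable)).2 hgsq
  have hLint : Integrable L μ := hL2.integrable (by norm_num)
  have hMint : Integrable M μ := hM2.integrable (by norm_num)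
  -- integrals over T₀
  have hIL : ∫ t in T₀, L t ∂μ = (μ T₀).toReal * Sf0 := by
    rw [hSf0def]; unfold Sm; field_simp; rfl
  have hIM : ∫ t in T₀, M t ∂μ = (μ T₀).toReal * Sg0 := by
    rw [hSg0def]; unfold Sm; field_simp; rfl
  have hILz : ∫ t in T₀, (L t - Sf0) ∂μ = 0 := by
    rw [integral_sub hLint.restrict (integrable_const _), hIL, integral_const,
      measureReal_def, Measure.restrict_apply_univ]
    simp [smul_eq_mul]
  have hIMz : ∫ t in T₀, (M t - Sg0) ∂μ = 0 := by
    rw [integral_sub hMint.restrict (integrable_const _), hIM, integral_const,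
      measureReal_def, Measure.restrict_apply_univ]
    simp [smul_eq_mul]
  -- pointwise description of log ∘ proj
  have hplogf : ∀ t, Real.log (proj μ T₀ f t)
      = T₀.indicator (fun t => L t - Sf0) t + Sf0 := by
    intro t
    by_cases ht : t ∈ T₀ <;> simp [proj, ht, Real.log_exp, hLdef, hSf0def]
  have hplogg : ∀ t, Real.log (proj μ T₀ g t)
      = T₀.indicator (fun t => M t - Sg0) t + Sg0 := by
    intro t
    by_cases ht : t ∈ T₀ <;> simp [proj, ht, Real.log_exp, hMdef, hSg0def]
  have hindfint : Integrable (T₀.indicator (fun t => L t - Sf0)) μ :=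
    (hLint.sub (integrable_const _)).indicator hT₀meas
  have hindgint : Integrable (T₀.indicator (fun t => M t - Sg0)) μ :=
    (hMint.sub (integrable_const _)).indicator hT₀meas
  -- Sm over univ of the projection
  have hSUf : Sm μ Set.univ (proj μ T₀ f) = Sf0 := by
    unfold Sm
    rw [Measure.restrict_univ]
    calc (μ Set.univ).toReal⁻¹ * ∫ t, Real.log (proj μ T₀ f t) ∂μ
        = (μ Set.univ).toReal⁻¹ *
            ∫ t, (T₀.indicator (fun t => L t - Sf0) t + Sf0) ∂μ := by
          congr 1; exact integral_congr_ae (Filter.Eventually.of_forall hplogf)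
      _ = Sf0 := by
          rw [integral_add hindfint (integrable_const _), integral_indicator hT₀meas,
            hILz, integral_const]
          simp [smul_eq_mul]
          field_simp
          rfl
  have hSUg : Sm μ Set.univ (proj μ T₀ g) = Sg0 := by
    unfold Sm
    rw [Measure.restrict_univ]
    calc (μ Set.univ).toReal⁻¹ * ∫ t, Real.log (proj μ T₀ g t) ∂μ
        = (μ Set.univ).toReal⁻¹ *
            ∫ t, (T₀.indicator (fun t => M t - Sg0) t + Sg0) ∂μ := by
          congr 1; exact integral_congr_ae (Filter.Eventually.of_forall hplogg)
      _ = Sg0 := by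
          rw [integral_add hindgint (integrable_const _), integral_indicator hT₀meas,
            hIMz, integral_const]
          simp [smul_eq_mul]
          field_simp
          rfl
  -- product integrability
  have hprod : ∀ a b : ℝ,
      Integrable (fun t => (L t - a) * (M t - b)) μ := by
    intro a b
    have h1 : MemLp (fun t => L t - a) 2 μ := hL2.sub (memLp_const _)
    have h2 : MemLp (fun t => M t - b) 2 μ := hM2.sub (memLp_const _)
    have := (h1.smul h2 (p := 2) (q := 2) (r := 1)).integrable le_rfl
    simpa [smul_eq_mul, mul_comm, Pi.mul_def] using this
  -- key lemmas: shifting the constant in one factor doesn't change the T₀-integral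
  have keyR : ∀ c : ℝ, ∫ t in T₀, (L t - Sf0) * (M t - c) ∂μ
      = ∫ t in T₀, (L t - Sf0) * (M t - Sg0) ∂μ := by
    intro c
    have hexp : ∀ t, (L t - Sf0) * (M t - c)
        = (L t - Sf0) * (M t - Sg0) + (Sg0 - c) * (L t - Sf0) := by intro t; ring
    have hint2 : Integrable (fun t => (Sg0 - c) * (L t - Sf0)) (μ.restrict T₀) :=
      (hLint.restrict.sub (integrable_const _)).const_mul _
    rw [integral_congr_ae (Filter.Eventually.of_forall fun t => hexp t),
      integral_add (hprod Sf0 Sg0).restrict hint2,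
      integral_const_mul, hILz]
    ring
  have keyL : ∀ c : ℝ, ∫ t in T₀, (L t - c) * (M t - Sg0) ∂μ
      = ∫ t in T₀, (L t - Sf0) * (M t - Sg0) ∂μ := by
    intro c
    have hexp : ∀ t, (L t - c) * (M t - Sg0)
        = (L t - Sf0) * (M t - Sg0) + (Sf0 - c) * (M t - Sg0) := by intro t; ring
    have hint2 : Integrable (fun t => (Sf0 - c) * (M t - Sg0)) (μ.restrict T₀) :=
      (hMint.restrict.sub (integrable_const _)).const_mul _
    rw [integral_congr_ae (Filter.Eventually.of_forall fun t => hexp t),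
      integral_add (hprod Sf0 Sg0).restrict hint2,
      integral_const_mul, hIMz]
    ring
  -- compute LHS
  have hLHS : ∫ t, (Real.log (proj μ T₀ f t) - Sm μ Set.univ (proj μ T₀ f)) *
      (M t - Sm μ Set.univ g) ∂μ
      = ∫ t in T₀, (L t - Sf0) * (M t - Sg0) ∂μ := by
    have hpt : ∀ t, (Real.log (proj μ T₀ f t) - Sm μ Set.univ (proj μ T₀ f)) *
        (M t - Sm μ Set.univ g)
        = T₀.indicator (fun t => (L t - Sf0) * (M t - Sm μ Set.univ g)) t := by
      intro t
      rw [hSUf, hplogf t]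
      by_cases ht : t ∈ T₀ <;> simp [ht]
    rw [integral_congr_ae (Filter.Eventually.of_forall hpt),
      integral_indicator hT₀meas, keyR]
  have hRHS : ∫ t, (L t - Sm μ Set.univ f) *
      (Real.log (proj μ T₀ g t) - Sm μ Set.univ (proj μ T₀ g)) ∂μ
      = ∫ t in T₀, (L t - Sf0) * (M t - Sg0) ∂μ := by
    have hpt : ∀ t, (L t - Sm μ Set.univ f) *
        (Real.log (proj μ T₀ g t) - Sm μ Set.univ (proj μ T₀ g))
        = T₀.indicator (fun t => (L t - Sm μ Set.univ f) * (M t - Sg0)) t := by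
      intro t
      rw [hSUg, hplogg t]
      by_cases ht : t ∈ T₀ <;> simp [ht]
    rw [integral_congr_ae (Filter.Eventually.of_forall hpt),
      integral_indicator hT₀meas, keyL]
  exact ⟨hLHS.trans hRHS.symm, hLHS⟩
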